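/- arXiv:1704.06037 — 2 statements merged into one kernel-verified Lean document; each statement's English description precedes it below -/
import Mathlib

section
/- Let π be a profile with an odd number n of voters, and let ≻₀ be a preference such that Flexible Condition 1 holds for π and ≻₀. Then for all alternatives a, b: a M_π b implies a ≻₀ b. Consequently, ≻₀ coincides with the majority relation on π. -/
open Classical

/-- Inversion distance between two preference relations: the number of (ordered
representatives of) unordered pairs ranked oppositely. For strict total orders,
each oppositely-ranked unordered pair {x,y} is counted exactly once. -/
noncomputable def invDist {A : Type*} [Fintype A] (r r' : A → A → Prop) : ℕ :=
  {p : A × A | r p.1 p.2 ∧ r' p.2 p.1}.ncard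

/-- Frequency of a preference in a profile (list of preferences). -/
noncomputable def freq {A : Type*} (π : List (A → A → Prop)) (r : A → A → Prop) : ℕ :=
  {i : Fin π.length | π.get i = r}.ncard

/-- Number of voters in the profile ranking `a` above `b`. -/
noncomputable def votesFor {A : Type*} (π : List (A → A → Prop)) (a b : A) : ℕ :=
  {i : Fin π.length | π.get i a b}.ncard

/-- The preference obtained by swapping alternatives `a` and `b` in the ranking. -/
def swapPref {A : Type*} [DecidableEq A] (a b : A) (r : A → A → Prop) : A → A → Prop :=
  fun x y => r (Equiv.swap a b x) (Equiv.swap a b y)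

section Aux

variable {A : Type*}

lemma sto_asymm {r : A → A → Prop} (h : IsStrictTotalOrder A r) {x y : A}
    (hxy : r x y) : ¬ r y x := fun hyx => h.irrefl x (h.trans _ _ _ hxy hyx)

lemma sto_total {r : A → A → Prop} (h : IsStrictTotalOrder A r) {x y : A}
    (hxy : x ≠ y) (hn : ¬ r x y) : r y x := by
  by_contra h2
  exact hxy (h.trichotomous x y hn h2)

lemma swapPref_sto [DecidableEq A] {r : A → A → Prop} (h : IsStrictTotalOrder A r)
    (a b : A) : IsStrictTotalOrder A (swapPref a b r) := by
  refine { irrefl := fun x => h.irrefl _,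
           trans := fun x y z hxy hyz => h.trans _ _ _ hxy hyz,
           trichotomous := ?_ }
  intro x y h1 h2
  exact (Equiv.swap a b).injective (h.trichotomous _ _ h1 h2)

lemma ncard_filter_eq {α : Type*} [Fintype α] (p : α → Prop) [DecidablePred p] :
    {x | p x}.ncard = (Finset.univ.filter p).card := by
  rw [Set.ncard_eq_toFinset_card']
  congr 1
  ext x
  simp

/-- Key combinatorial lemma: swapping `a` and `b` in `r` strictly decreases the
inversion distance to `r0` when `r` ranks `a` above `b` but `r0` ranks `b` above `a`. -/
lemma invDist_swap_lt [Fintype A] {r r0 : A → A → Prop}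
    (hr : IsStrictTotalOrder A r) (hr0 : IsStrictTotalOrder A r0)
    {a b : A} (hab : a ≠ b) (hrab : r a b) (hr0ba : r0 b a) :
    invDist (swapPref a b r) r0 < invDist r r0 := by
  classical
  set s : Equiv.Perm A := Equiv.swap a b with hs
  set D : Set (A × A) := {p : A × A | r p.1 p.2 ∧ r0 p.2 p.1} with hD
  set D' : Set (A × A) := {p : A × A | r (s p.1) (s p.2) ∧ r0 p.2 p.1} with hD'
  have hDab : (a, b) ∈ D := ⟨hrab, hr0ba⟩
  have hDfin : D.Finite := Set.toFinite _
  set φ : A × A → A × A := fun p => if r p.1 p.2 then p else (s p.1, s p.2) with hφ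
  -- basic facts about the swap
  have hsa : s a = b := Equiv.swap_apply_left a b
  have hsb : s b = a := Equiv.swap_apply_right a b
  have hsc : ∀ c, c ≠ a → c ≠ b → s c = c := fun c h1 h2 => Equiv.swap_apply_of_ne_of_ne h1 h2
  have hmaps : ∀ p ∈ D', φ p ∈ D \ {(a, b)} := by
    rintro ⟨x, y⟩ ⟨h1, h2⟩
    simp only [Set.mem_setOf_eq] at h1 h2
    have hxy : x ≠ y := by
      rintro rfl
      exact hr.irrefl _ h1
    by_cases hrxy : r x y
    · have hφeq : φ (x, y) = (x, y) := by simp [hφ, hrxy]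
      rw [hφeq]
      refine ⟨⟨hrxy, h2⟩, ?_⟩
      simp only [Set.mem_singleton_iff, Prod.mk.injEq, not_and]
      rintro rfl rfl
      rw [hsa, hsb] at h1
      exact sto_asymm hr hrxy h1
    · have hφeq : φ (x, y) = (s x, s y) := by simp [hφ, hrxy]
      have hryx : r y x := sto_total hr hxy hrxy
      rw [hφeq]
      -- case analysis on x, y vs a, b
      have key : r0 (s y) (s x) := by
        by_cases hxa : x = a
        · subst hxa
          by_cases hyb : y = b
          · subst hyb
            exact absurd h1 (by rw [hsa, hsb]; exact sto_asymm hr hrab)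
          · -- x = a, y ∉ {a, b} (y ≠ a since x ≠ y)
            exfalso
            rw [hsa, hsc y (Ne.symm hxy) hyb] at h1
            -- h1 : r b y, hryx : r y a
            exact sto_asymm hr hrab (hr.trans _ _ _ h1 hryx)
        · by_cases hxb : x = b
          · subst hxb
            by_cases hya : y = a
            · subst hya
              exact absurd h2 (sto_asymm hr0 hr0ba)
            · -- x = b, y ∉ {a,b}: need r0 (s y) (s b) = r0 y a
              rw [hsb, hsc y hya hxy.symm]
              exact hr0.trans _ _ _ h2 hr0ba
          · -- x ∉ {a, b}
            by_cases hya : y = a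
            · subst hya
              rw [hsa, hsc x hxa hxb]
              exact hr0.trans _ _ _ hr0ba h2
            · by_cases hyb : y = b
              · subst hyb
                exfalso
                rw [hsc x hxa hxb, hsb] at h1
                -- h1 : r x a, hryx : r b x
                exact sto_asymm hr hrab (hr.trans _ _ _ hryx h1)
              · exfalso
                rw [hsc x hxa hxb, hsc y hya hyb] at h1
                exact hrxy h1
      refine ⟨⟨h1, key⟩, ?_⟩
      simp only [Set.mem_singleton_iff, Prod.mk.injEq, not_and]
      intro hxa hyb
      have hx : x = b := by
        have := congrArg s hxa
        rwa [Equiv.swap_apply_self, hsa] at this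
      have hy : y = a := by
        have := congrArg s hyb
        rwa [Equiv.swap_apply_self, hsb] at this
      subst hx; subst hy
      exact sto_asymm hr0 hr0ba h2
  have hinj : Set.InjOn φ D' := by
    rintro ⟨x, y⟩ hp ⟨u, v⟩ hq heq
    simp only [Set.mem_setOf_eq, hD'] at hp hq
    by_cases h1 : r x y <;> by_cases h2 : r u v
    · simpa [hφ, h1, h2] using heq
    · simp only [hφ, h1, h2, if_true, if_false, if_pos, if_neg, Prod.mk.injEq] at heq
      exfalso
      obtain ⟨e1, e2⟩ : x = s u ∧ y = s v := by
        simpa [hφ, h1, h2] using heq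
      apply h2
      have := hp.1
      rw [e1, e2, Equiv.swap_apply_self, Equiv.swap_apply_self] at this
      exact this
    · exfalso
      obtain ⟨e1, e2⟩ : s x = u ∧ s y = v := by
        simpa [hφ, h1, h2] using heq
      apply h1
      have := hq.1
      rw [← e1, ← e2, Equiv.swap_apply_self, Equiv.swap_apply_self] at this
      exact this
    · obtain ⟨e1, e2⟩ : s x = s u ∧ s y = s v := by
        simpa [hφ, h1, h2] using heq
      exact Prod.ext (s.injective e1) (s.injective e2)
  have step1 : D'.ncard ≤ (D \ {(a, b)}).ncard :=
    Set.ncard_le_ncard_of_injOn φ hmaps hinj hDfin.diff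
  have step2 : (D \ {(a, b)}).ncard < D.ncard :=
    Set.ncard_diff_singleton_lt_of_mem hDab hDfin
  have : invDist (swapPref a b r) r0 = D'.ncard := rfl
  rw [this]
  exact lt_of_le_of_lt step1 step2

lemma swapPref_invol {A : Type*} [DecidableEq A] (a b : A) (r : A → A → Prop) :
    swapPref a b (swapPref a b r) = r := by
  funext x y
  simp [swapPref, Equiv.swap_apply_self]

lemma swapPref_injective {A : Type*} [DecidableEq A] (a b : A) :
    Function.Injective (swapPref a b (A := A)) := by
  intro p q h
  rw [← swapPref_invol a b p, h, swapPref_invol]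

lemma swapPref_ba {A : Type*} [DecidableEq A] (a b : A) (r : A → A → Prop) :
    swapPref a b r b a = r a b := by
  simp [swapPref, Equiv.swap_apply_left, Equiv.swap_apply_right]

end Aux

/-- With an odd number of voters, Flexible Condition 1 implies that the weak
majority relation implies `≻₀`, and consequently `≻₀` coincides with the
majority relation (on distinct alternatives). -/
theorem flexible_odd_majority_coincides {A : Type*} [Fintype A]
    (hK : 3 ≤ Fintype.card A)
    (π : List (A → A → Prop)) (hπ : ∀ r ∈ π, IsStrictTotalOrder A r)
    (hodd : Odd π.length)
    (r0 : A → A → Prop) (hr0 : IsStrictTotalOrder A r0)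
    (hflex : ∀ r' r : A → A → Prop, IsStrictTotalOrder A r' → IsStrictTotalOrder A r →
      freq π r' > freq π r → invDist r' r0 ≤ invDist r r0) :
    (∀ a b : A, a ≠ b → votesFor π b a ≤ votesFor π a b → r0 a b) ∧
    (∀ a b : A, a ≠ b → (r0 a b ↔ votesFor π b a ≤ votesFor π a b)) := by
  classical
  have main : ∀ a b : A, a ≠ b → votesFor π b a ≤ votesFor π a b → r0 a b := by
    intro a b hab hmaj
    by_contra hnr0
    have hr0ba : r0 b a := sto_total hr0 hab hnr0
    set f : Fin π.length → (A → A → Prop) := π.get with hf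
    have hfπ : ∀ i, f i ∈ π := fun i => by rw [hf]; simpa using List.get_mem π i.1 i.2
    set Sf := Finset.univ.filter (fun i => f i a b) with hSf
    set Tf := Finset.univ.filter (fun i => f i b a) with hTf
    have hvS : votesFor π a b = Sf.card := by
      rw [hSf, hf]; exact ncard_filter_eq _
    have hvT : votesFor π b a = Tf.card := by
      rw [hTf, hf]; exact ncard_filter_eq _
    set freqF : (A → A → Prop) → ℕ :=
      fun q => (Finset.univ.filter (fun i => f i = q)).card with hfreqF
    have hfreq : ∀ q, freq π q = freqF q := by
      intro q
      rw [hfreqF, hf]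
      show ({i : Fin π.length | π.get i = q}).ncard
        = ((Finset.univ : Finset (Fin π.length)).filter (fun i => π.get i = q)).card
      exact ncard_filter_eq _
    set R := Sf.image f with hR
    have hmem : ∀ rr ∈ R, rr ∈ π ∧ rr a b := by
      intro rr hrr
      obtain ⟨i, hi, rfl⟩ := Finset.mem_image.mp hrr
      have : f i a b := (Finset.mem_filter.mp hi).2
      exact ⟨hfπ i, this⟩
    have step1 : Sf.card = ∑ rr ∈ R, (Sf.filter (fun i => f i = rr)).card :=
      Finset.card_eq_sum_card_fiberwise (fun i hi => Finset.mem_image_of_mem f hi)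
    have step2 : ∀ rr ∈ R, (Sf.filter (fun i => f i = rr)).card = freqF rr := by
      intro rr hrr
      rw [hfreqF]
      congr 1
      ext i
      simp only [hSf, Finset.mem_filter, Finset.mem_univ, true_and, and_iff_right_iff_imp]
      intro hi
      rw [hi]
      exact (hmem rr hrr).2
    have step3 : ∀ rr ∈ R, freqF rr ≤ freqF (swapPref a b rr) := by
      intro rr hrr
      obtain ⟨hrrπ, hrrab⟩ := hmem rr hrr
      have hrrsto : IsStrictTotalOrder A rr := hπ rr hrrπ
      by_contra hlt
      push_neg at hlt
      have hgt : freq π rr > freq π (swapPref a b rr) := by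
        rw [hfreq, hfreq]; exact hlt
      have := hflex rr (swapPref a b rr) hrrsto (swapPref_sto hrrsto a b) hgt
      exact absurd this (not_le.mpr (invDist_swap_lt hrrsto hr0 hab hrrab hr0ba))
    set R' := R.image (swapPref a b) with hR'
    have step4 : ∑ rr ∈ R, freqF (swapPref a b rr) = ∑ q ∈ R', freqF q :=
      (Finset.sum_image (fun x _ y _ h => swapPref_injective a b h)).symm
    have hmem' : ∀ q ∈ R', q b a := by
      intro q hq
      obtain ⟨rr, hrr, rfl⟩ := Finset.mem_image.mp hq
      rw [swapPref_ba]
      exact (hmem rr hrr).2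
    have step5 : ∑ q ∈ R', freqF q ≤ Tf.card := by
      have hdisj : ∀ q ∈ R', ∀ q' ∈ R', q ≠ q' →
          Disjoint (Finset.univ.filter (fun i => f i = q))
            (Finset.univ.filter (fun i => f i = q')) := by
        intro q _ q' _ hne
        apply Finset.disjoint_left.mpr
        intro i hi hi'
        have h1 := (Finset.mem_filter.mp hi).2
        have h2 := (Finset.mem_filter.mp hi').2
        exact hne (h1 ▸ h2 ▸ rfl)
      calc ∑ q ∈ R', freqF q
          = (R'.biUnion (fun q => Finset.univ.filter (fun i => f i = q))).card :=
            (Finset.card_biUnion hdisj).symm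
        _ ≤ Tf.card := by
            apply Finset.card_le_card
            intro i hi
            obtain ⟨q, hq, hiq⟩ := Finset.mem_biUnion.mp hi
            have : f i = q := (Finset.mem_filter.mp hiq).2
            simp only [hTf, Finset.mem_filter, Finset.mem_univ, true_and]
            rw [this]
            exact hmem' q hq
    have hST : Sf.card ≤ Tf.card := by
      calc Sf.card = ∑ rr ∈ R, (Sf.filter (fun i => f i = rr)).card := step1
        _ = ∑ rr ∈ R, freqF rr := Finset.sum_congr rfl step2
        _ ≤ ∑ rr ∈ R, freqF (swapPref a b rr) := Finset.sum_le_sum step3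
        _ = ∑ q ∈ R', freqF q := step4
        _ ≤ Tf.card := step5
    have hTS : Tf.card ≤ Sf.card := by rw [← hvS, ← hvT]; exact hmaj
    have heq : Sf.card = Tf.card := le_antisymm hST hTS
    -- parity contradiction
    have hTc : Tf = Finset.univ.filter (fun i => ¬ f i a b) := by
      ext i
      simp only [hTf, Finset.mem_filter, Finset.mem_univ, true_and]
      have hsto : IsStrictTotalOrder A (f i) := hπ _ (hfπ i)
      constructor
      · exact fun h => sto_asymm hsto h
      · exact fun h => sto_total hsto hab h
    have hsum : Sf.card + Tf.card = π.length := by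
      rw [hSf, hTc]
      rw [Finset.card_filter_add_card_filter_not]
      simp
    have : Even π.length := by
      rw [← hsum, heq]
      exact ⟨Tf.card, rfl⟩
    exact (Nat.not_even_iff_odd.mpr hodd) this
  refine ⟨main, fun a b hab => ⟨fun h0 => ?_, main a b hab⟩⟩
  by_contra hle
  have : votesFor π a b ≤ votesFor π b a := le_of_lt (not_le.mp hle)
  exact sto_asymm hr0 h0 (main b a hab.symm this)
end

section
/- Let π be a profile and ≻₀ a preference satisfying Flexible Condition 1. Then the top-ranked alternative of ≻₀ receives a maximal total score under every scoring rule: for every weakly decreasing score vector S and every alternative b, the total score of Best(≻₀) is at least the total score of b. -/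
open Classical
set_option linter.unusedSectionVars false
set_option linter.unusedVariables false

/-- The (0-based) rank of alternative `x` in preference `r`: the number of
alternatives ranked strictly above it. The top alternative has rank 0. -/
noncomputable def rank {A : Type*} (r : A → A → Prop) (x : A) : ℕ :=
  {y | r y x}.ncard

/-- Total score of alternative `x` in profile `π` under a scoring vector `S`
(`S j` is the score of the alternative with `j` alternatives above it). -/
noncomputable def totalScore {A : Type*} (π : List (A → A → Prop)) (S : ℕ → ℝ) (x : A) : ℝ :=
  ∑ i : Fin π.length, S (rank (π.get i) x)

section helpers
variable {A : Type*} [Fintype A] [DecidableEq A]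

lemma swapPref_swapPref (a b : A) (r : A → A → Prop) : swapPref a b (swapPref a b r) = r := by
  funext x y; simp [swapPref, Equiv.swap_apply_self]

lemma isSTO_swapPref (a b : A) {r : A → A → Prop} (h : IsStrictTotalOrder A r) :
    IsStrictTotalOrder A (swapPref a b r) := by
  refine { trichotomous := ?_, irrefl := ?_, trans := ?_ }
  · intro x y
    rcases (haveI := h; trichotomous_of r (Equiv.swap a b x) (Equiv.swap a b y)) with h1 | h1 | h1
    · exact fun hn _ => absurd h1 hn
    · exact fun _ _ => (Equiv.swap a b).injective h1
    · exact fun _ hn => absurd h1 hn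
  · exact fun x => h.irrefl _
  · exact fun x y z => h.trans _ _ _

lemma ncard_comp_equiv (e : A ≃ A) (p : A → Prop) :
    {y | p (e y)}.ncard = {y | p y}.ncard := by
  have : {y | p (e y)} = e.symm '' {y | p y} := by
    ext y
    simp only [Set.mem_setOf_eq, Set.mem_image]
    constructor
    · intro hy; exact ⟨e y, hy, by simp⟩
    · rintro ⟨z, hz, rfl⟩; simpa using hz
  rw [this, Set.ncard_image_of_injective _ e.symm.injective]

lemma rank_swapPref (a b : A) (r : A → A → Prop) (x : A) :
    rank (swapPref a b r) x = rank r (Equiv.swap a b x) :=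
  ncard_comp_equiv (Equiv.swap a b) (fun z => r z (Equiv.swap a b x))

lemma rank_lt_rank {r : A → A → Prop} (h : IsStrictTotalOrder A r) {x y : A} (hxy : r x y) :
    rank r x < rank r y := by
  apply Set.ncard_lt_ncard
  · constructor
    · intro z hz; exact h.trans _ _ _ hz hxy
    · intro hsub
      exact h.irrefl x (hsub hxy)
  · exact Set.toFinite _

end helpers

section key
variable {A : Type*} [Fintype A] [DecidableEq A]

lemma invDist_lt {r r0 : A → A → Prop} (hr : IsStrictTotalOrder A r)
    (hr0 : IsStrictTotalOrder A r0) {best b : A}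
    (hbest : ∀ y : A, y ≠ best → r0 best y) (hb : b ≠ best) (h : r best b) :
    invDist r r0 < invDist (swapPref best b r) r0 := by
  classical
  set σr := swapPref best b r with hσ
  set D : Set (A × A) := {p | r p.1 p.2 ∧ r0 p.2 p.1} with hD
  set D' : Set (A × A) := {p | σr p.1 p.2 ∧ r0 p.2 p.1} with hD'
  have hswb : Equiv.swap best b b = best := Equiv.swap_apply_right _ _
  have hswbest : Equiv.swap best b best = b := Equiv.swap_apply_left _ _
  have hswo : ∀ x : A, x ≠ best → x ≠ b → Equiv.swap best b x = x := fun x h1 h2 =>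
    Equiv.swap_apply_of_ne_of_ne h1 h2
  have hmem : (b, best) ∈ D' := by
    refine ⟨?_, hbest b hb⟩
    show r (Equiv.swap best b b) (Equiv.swap best b best)
    rw [hswb, hswbest]; exact h
  -- facts about membership in D
  have hfst_ne_best : ∀ p ∈ D, p.1 ≠ best := by
    rintro ⟨x, y⟩ ⟨hxy, hyx⟩ hx
    rw [hx] at hxy hyx
    have hy : y ≠ best := fun hy => hr.irrefl _ (hy ▸ hxy)
    exact hr0.irrefl y (hr0.trans _ _ _ hyx (hbest y hy))
  set f : A × A → A × A := fun p =>
    if p.2 = best then (if r0 b p.1 then (p.1, b) else (p.1, best))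
    else if p.2 = b then (p.1, best) else p with hf
  have key : D.ncard ≤ (D' \ {(b, best)}).ncard := by
    apply Set.ncard_le_ncard_of_injOn f ?_ ?_ (Set.toFinite _)
    · -- maps to
      rintro ⟨x, y⟩ hp
      obtain ⟨hxy, hyx⟩ := hp
      have hxbest : x ≠ best := hfst_ne_best _ ⟨hxy, hyx⟩
      by_cases hy1 : y = best
      · rw [hy1] at hxy hyx ⊢
        have hxb : x ≠ b := by
          intro hxb'
          rw [hxb'] at hxy
          exact hr.irrefl b (hr.trans _ _ _ hxy h)
        simp only [hf, if_pos rfl]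
        by_cases hbx : r0 b x
        · rw [if_pos hbx]
          refine ⟨⟨?_, hbx⟩, ?_⟩
          · show r (Equiv.swap best b x) (Equiv.swap best b b)
            rw [hswo x hxbest hxb, hswb]; exact hxy
          · simp only [Set.mem_singleton_iff, Prod.mk.injEq]
            rintro ⟨rfl, -⟩; exact hxb rfl
        · rw [if_neg hbx]
          refine ⟨⟨?_, hyx⟩, ?_⟩
          · show r (Equiv.swap best b x) (Equiv.swap best b best)
            rw [hswo x hxbest hxb, hswbest]
            exact hr.trans _ _ _ hxy h
          · simp only [Set.mem_singleton_iff, Prod.mk.injEq]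
            rintro ⟨rfl, -⟩; exact hxb rfl
      · by_cases hy2 : y = b
        · rw [hy2] at hxy hyx ⊢
          have hxb : x ≠ b := fun hxb => hr.irrefl b (hxb ▸ hxy)
          simp only [hf, if_neg hb, if_pos rfl]
          refine ⟨⟨?_, hbest x hxbest⟩, ?_⟩
          · show r (Equiv.swap best b x) (Equiv.swap best b best)
            rw [hswo x hxbest hxb, hswbest]; exact hxy
          · simp only [Set.mem_singleton_iff, Prod.mk.injEq]
            rintro ⟨rfl, -⟩; exact hxb rfl
        · simp only [hf, if_neg hy1, if_neg hy2]
          by_cases hxb : x = b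
          · rw [hxb] at hxy hyx ⊢
            refine ⟨⟨?_, hyx⟩, ?_⟩
            · show r (Equiv.swap best b b) (Equiv.swap best b y)
              rw [hswb, hswo y hy1 hy2]
              exact hr.trans _ _ _ h hxy
            · simp only [Set.mem_singleton_iff, Prod.mk.injEq]
              rintro ⟨-, rfl⟩; exact hy1 rfl
          · refine ⟨⟨?_, hyx⟩, ?_⟩
            · show r (Equiv.swap best b x) (Equiv.swap best b y)
              rw [hswo x hxbest hxb, hswo y hy1 hy2]; exact hxy
            · simp only [Set.mem_singleton_iff, Prod.mk.injEq]
              rintro ⟨-, rfl⟩; exact hy1 rfl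
    · -- injOn
      rintro ⟨x, y⟩ hp ⟨x', y'⟩ hq heq
      obtain ⟨hxy, hyx⟩ := hp
      obtain ⟨hxy', hyx'⟩ := hq
      -- first coordinates are always preserved
      have hfst : ∀ p : A × A, (f p).1 = p.1 := by
        intro p
        simp only [hf]
        split_ifs <;> rfl
      have hx : x = x' := by
        have := congrArg Prod.fst heq
        rwa [hfst, hfst] at this
      subst hx
      -- analyze second coordinates
      have hsnd : ∀ (z w : A), r z w → r0 w z →
          (f (z, w)).2 = b → (w = best ∧ r0 b z) := by
        intro z w hzw hwz hfz
        simp only [hf] at hfz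
        by_cases h1 : w = best
        · subst h1
          simp only [if_pos rfl] at hfz
          by_cases h2 : r0 b z
          · exact ⟨rfl, h2⟩
          · rw [if_neg h2] at hfz; exact absurd hfz hb.symm
        · rw [if_neg h1] at hfz
          by_cases h2 : w = b
          · rw [if_pos h2] at hfz; exact absurd hfz hb.symm
          · rw [if_neg h2] at hfz; exact absurd hfz h2
      have hsndbest : ∀ (z w : A), r z w → r0 w z →
          (f (z, w)).2 = best → (w = best ∧ ¬ r0 b z) ∨ w = b := by
        intro z w hzw hwz hfz
        simp only [hf] at hfz
        by_cases h1 : w = best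
        · subst h1
          simp only [if_pos rfl] at hfz
          by_cases h2 : r0 b z
          · rw [if_pos h2] at hfz; exact absurd hfz hb
          · exact Or.inl ⟨rfl, h2⟩
        · rw [if_neg h1] at hfz
          by_cases h2 : w = b
          · exact Or.inr h2
          · rw [if_neg h2] at hfz; exact absurd hfz h1
      have hsndother : ∀ (z w : A), (f (z, w)).2 ≠ best → (f (z, w)).2 ≠ b →
          f (z, w) = (z, w) := by
        intro z w h1 h2
        simp only [hf] at h1 h2 ⊢
        by_cases k1 : w = best
        · exfalso
          simp only [if_pos k1] at h1 h2
          by_cases k2 : r0 b z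
          · rw [if_pos k2] at h2; exact h2 rfl
          · rw [if_neg k2] at h1; exact h1 rfl
        · rw [if_neg k1] at h1 h2 ⊢
          by_cases k2 : w = b
          · exfalso; rw [if_pos k2] at h1; exact h1 rfl
          · rw [if_neg k2]
      have h2eq : (f (x, y)).2 = (f (x, y')).2 := congrArg Prod.snd heq
      by_cases c1 : (f (x, y)).2 = b
      · obtain ⟨hy1, hy2⟩ := hsnd x y hxy hyx c1
        obtain ⟨hy1', hy2'⟩ := hsnd x y' hxy' hyx' (h2eq ▸ c1)
        rw [hy1, hy1']
      · by_cases c2 : (f (x, y)).2 = best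
        · have c2' : (f (x, y')).2 = best := h2eq ▸ c2
          rcases hsndbest x y hxy hyx c2 with ⟨hy1, hy2⟩ | hy1 <;>
            rcases hsndbest x y' hxy' hyx' c2' with ⟨hy1', hy2'⟩ | hy1'
          · rw [hy1, hy1']
          · -- y = best, ¬r0 b x ; y' = b, so r0 b x from membership
            exfalso; exact hy2 (hy1' ▸ hyx')
          · exfalso; exact hy2' (hy1 ▸ hyx)
          · rw [hy1, hy1']
        · have c1' : (f (x, y')).2 ≠ b := h2eq ▸ c1
          have c2' : (f (x, y')).2 ≠ best := h2eq ▸ c2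
          have e1 := hsndother x y c2 c1
          have e2 := hsndother x y' c2' c1'
          rw [e1, e2] at heq
          exact heq
  have hlt : (D' \ {(b, best)}).ncard < D'.ncard :=
    Set.ncard_diff_singleton_lt_of_mem hmem (Set.toFinite _)
  exact lt_of_le_of_lt key hlt

end key

section sums
variable {A : Type*} [Fintype A] [DecidableEq A]

lemma freq_eq_card (π : List (A → A → Prop)) (r : A → A → Prop) :
    freq π r = (Finset.univ.filter (fun i : Fin π.length => π.get i = r)).card := by
  classical
  rw [freq, Set.ncard_eq_toFinset_card']
  congr 1
  ext i
  simp

lemma sum_get_eq (π : List (A → A → Prop)) (T : Finset (A → A → Prop))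
    (hT : ∀ i : Fin π.length, π.get i ∈ T) (h : (A → A → Prop) → ℝ) :
    ∑ i : Fin π.length, h (π.get i) = ∑ r ∈ T, (freq π r : ℝ) * h r := by
  classical
  rw [← Finset.sum_fiberwise_of_maps_to (g := fun i : Fin π.length => π.get i)
    (fun i _ => hT i) (fun i => h (π.get i))]
  refine Finset.sum_congr rfl fun r _ => ?_
  rw [Finset.sum_congr rfl (fun i hi => by rw [(Finset.mem_filter.1 hi).2] : 
    ∀ i ∈ Finset.univ.filter (fun i : Fin π.length => π.get i = r), h (π.get i) = h r)]
  rw [Finset.sum_const, freq_eq_card]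
  simp [mul_comm]

end sums


/-- Under Flexible Condition 1, the top-ranked alternative of `≻₀` receives a
maximal total score under every scoring rule. -/
theorem flexible_best_scoring {A : Type*} [Fintype A]
    (hK : 3 ≤ Fintype.card A)
    (π : List (A → A → Prop)) (hπ : ∀ r ∈ π, IsStrictTotalOrder A r)
    (r0 : A → A → Prop) (hr0 : IsStrictTotalOrder A r0)
    (hflex : ∀ r' r : A → A → Prop, IsStrictTotalOrder A r' → IsStrictTotalOrder A r →
      freq π r' > freq π r → invDist r' r0 ≤ invDist r r0)
    (best : A) (hbest : ∀ y : A, y ≠ best → r0 best y)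
    (S : ℕ → ℝ) (hS : Antitone S) :
    ∀ b : A, totalScore π S b ≤ totalScore π S best := by
  classical
  intro b
  by_cases hbb : b = best
  · rw [hbb]
  -- setup
  set g : (A → A → Prop) → ℝ := fun r => S (rank r best) - S (rank r b) with hg
  set σ : (A → A → Prop) → (A → A → Prop) := swapPref best b with hσdef
  set T : Finset (A → A → Prop) := π.toFinset ∪ π.toFinset.image σ with hT
  have hTmem : ∀ i : Fin π.length, π.get i ∈ T := fun i =>
    Finset.mem_union_left _ (List.mem_toFinset.2 (π.get_mem i))
  have hTsto : ∀ r ∈ T, IsStrictTotalOrder A r := by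
    intro r hrT
    rcases Finset.mem_union.1 hrT with h1 | h1
    · exact hπ r (List.mem_toFinset.1 h1)
    · obtain ⟨s, hs, rfl⟩ := Finset.mem_image.1 h1
      exact isSTO_swapPref _ _ (hπ s (List.mem_toFinset.1 hs))
  have hσinv : ∀ r, σ (σ r) = r := fun r => swapPref_swapPref _ _ r
  have hσT : ∀ r ∈ T, σ r ∈ T := by
    intro r hrT
    rcases Finset.mem_union.1 hrT with h1 | h1
    · exact Finset.mem_union_right _ (Finset.mem_image_of_mem _ h1)
    · obtain ⟨s, hs, rfl⟩ := Finset.mem_image.1 h1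
      rw [hσinv]
      exact Finset.mem_union_left _ hs
  have hσap : ∀ r : A → A → Prop, σ r best b = r b best := by
    intro r
    show r (Equiv.swap best b best) (Equiv.swap best b b) = r b best
    rw [Equiv.swap_apply_left, Equiv.swap_apply_right]
  have hσap' : ∀ r : A → A → Prop, σ r b best = r best b := by
    intro r
    show r (Equiv.swap best b b) (Equiv.swap best b best) = r best b
    rw [Equiv.swap_apply_left, Equiv.swap_apply_right]
  have hgσ : ∀ r, g (σ r) = - g r := by
    intro r
    simp only [hg]
    rw [rank_swapPref, rank_swapPref, Equiv.swap_apply_left, Equiv.swap_apply_right]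
    ring
  have hfreqle : ∀ r ∈ T, r best b → (freq π (σ r) : ℝ) ≤ (freq π r : ℝ) := by
    intro r hrT hrb
    have hsto := hTsto r hrT
    have hd : invDist r r0 < invDist (σ r) r0 :=
      invDist_lt hsto hr0 hbest hbb hrb
    have hnat : ¬ freq π (σ r) > freq π r := fun hgt =>
      absurd (hflex (σ r) r (isSTO_swapPref _ _ hsto) hsto hgt) (not_le.2 hd)
    exact_mod_cast le_of_not_gt hnat
  have e1 : totalScore π S best - totalScore π S b = ∑ r ∈ T, (freq π r : ℝ) * g r := by
    rw [totalScore, totalScore, ← Finset.sum_sub_distrib]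
    exact sum_get_eq π T hTmem g
  rw [← sub_nonneg, e1, ← Finset.sum_filter_add_sum_filter_not T (fun r => r best b)]
  have e2 : ∑ r ∈ T.filter (fun r => ¬ r best b), (freq π r : ℝ) * g r
      = ∑ r ∈ T.filter (fun r => r best b), (freq π (σ r) : ℝ) * g (σ r) := by
    refine Finset.sum_nbij' σ σ ?_ ?_ ?_ ?_ ?_
    · intro a ha
      obtain ⟨haT, hanb⟩ := Finset.mem_filter.1 ha
      refine Finset.mem_filter.2 ⟨hσT a haT, ?_⟩
      rw [hσap]
      have hsto := hTsto a haT
      rcases (haveI := hsto; trichotomous_of a best b) with h1 | h1 | h1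
      · exact absurd h1 hanb
      · exact absurd h1.symm hbb
      · exact h1
    · intro a ha
      obtain ⟨haT, hab⟩ := Finset.mem_filter.1 ha
      refine Finset.mem_filter.2 ⟨hσT a haT, ?_⟩
      rw [hσap]
      intro h1
      have hsto := hTsto a haT
      exact hsto.irrefl best (hsto.trans _ _ _ hab h1)
    · intro a _; exact hσinv a
    · intro a _; exact hσinv a
    · intro a _
      rw [hσinv]
  rw [e2, ← Finset.sum_add_distrib]
  apply Finset.sum_nonneg
  intro r hrf
  obtain ⟨hrT, hrb⟩ := Finset.mem_filter.1 hrf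
  have hsto := hTsto r hrT
  have hgr : 0 ≤ g r := sub_nonneg.2 (hS (le_of_lt (rank_lt_rank hsto hrb)))
  have hfr := hfreqle r hrT hrb
  calc (0:ℝ) ≤ ((freq π r : ℝ) - (freq π (σ r) : ℝ)) * g r :=
        mul_nonneg (sub_nonneg.2 hfr) hgr
    _ = (freq π r : ℝ) * g r + (freq π (σ r) : ℝ) * g (σ r) := by
        rw [hgσ]; ring
end
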